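/- Let r_c > 0 and 0 < R ≤ r_c, let p ∈ ℝ² with ‖p‖ = R, and let X be uniformly distributed on the closed disk of radius r_c centered at the origin. Then: (i) for every t with 0 ≤ t ≤ r_c − R, the probability that ‖X − p‖ ≤ t equals t²/r_c²; and (ii) for every t with r_c − R ≤ t ≤ R + r_c, the probability that ‖X − p‖ ≤ t equals (r_c − R)²/r_c² + ∫_{r_c−R}^{t} (2r/(π r_c²)) · arccos((R² + r² − r_c²)/(2 R r)) dr. Equivalently, ‖X − p‖ has density 2r/r_c² on (0, r_c − R), density (2r/(π r_c²)) · arccos((R² + r² − r_c²)/(2 R r)) on (r_c − R, R + r_c), and density 0 elsewhere. (Paper's Lemma 1, case R_{c2u} ≤ r_c.) -/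

import Mathlib

open MeasureTheory Real

section Aux

open Set


lemma ang_measure (c : ℝ) :
    volume {θ ∈ Set.Ioo (-π) π | Real.cos θ ≤ c} = ENNReal.ofReal (2 * Real.arccos (-c)) := by
  rcases lt_or_ge c (-1) with hc | hc
  · have h1 : {θ ∈ Set.Ioo (-π) π | Real.cos θ ≤ c} = ∅ := by
      ext θ
      simp only [mem_sep_iff, mem_empty_iff_false, iff_false, not_and]
      intro _ h
      linarith [Real.neg_one_le_cos θ]
    have h2 : Real.arccos (-c) = 0 := Real.arccos_eq_zero.2 (by linarith)
    rw [h1, h2]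
    simp
  · set a := Real.arccos c with ha
    have ha0 : 0 ≤ a := Real.arccos_nonneg c
    have haπ : a ≤ π := Real.arccos_le_pi c
    have hset : {θ ∈ Set.Ioo (-π) π | Real.cos θ ≤ c}
        = Set.Ioo (-π) π \ Set.Ioo (-a) a := by
      ext θ
      simp only [mem_sep_iff, mem_diff, mem_Ioo, not_and, not_lt, mem_setOf_eq,
        and_congr_right_iff]
      intro hθ
      obtain ⟨hθ1, hθ2⟩ := hθ
      constructor
      · intro h hlt
        by_contra hlt2
        push_neg at hlt2
        have habs : |θ| < a := abs_lt.2 ⟨hlt, hlt2⟩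
        have hc1 : c < 1 := Real.arccos_pos.mp (lt_of_le_of_lt (abs_nonneg θ) habs)
        have h2 : Real.cos a < Real.cos |θ| :=
          Real.cos_lt_cos_of_nonneg_of_le_pi (abs_nonneg θ) haπ habs
        rw [Real.cos_abs, Real.cos_arccos (by linarith) hc1.le] at h2
        linarith
      · intro h
        have habs : a ≤ |θ| := by
          rcases le_or_gt θ (-a) with h' | h'
          · rw [abs_of_nonpos (by linarith)]; linarith
          · exact (h h').trans (le_abs_self θ)
        rcases le_or_gt c 1 with hc1 | hc1
        · have h2 : Real.cos |θ| ≤ Real.cos a :=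
            Real.cos_le_cos_of_nonneg_of_le_pi ha0 (abs_le.2 ⟨hθ1.le, hθ2.le⟩) habs
          rw [Real.cos_abs, Real.cos_arccos (by linarith) hc1] at h2
          exact h2
        · exact (Real.cos_le_one θ).trans hc1.le
    have hsub : Set.Ioo (-a) a ⊆ Set.Ioo (-π) π := fun x hx => by
      rcases mem_Ioo.1 hx with ⟨h1, h2⟩
      exact mem_Ioo.2 ⟨by linarith, by linarith⟩
    rw [hset, measure_diff hsub measurableSet_Ioo.nullMeasurableSet
      (by rw [Real.volume_Ioo]; exact ENNReal.ofReal_ne_top)]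
    rw [Real.volume_Ioo, Real.volume_Ioo, ← ENNReal.ofReal_sub _ (by linarith)]
    congr 1
    rw [Real.arccos_neg]
    ring

lemma ang_integral (c : ℝ) :
    ∫ θ in Set.Ioo (-π) π, Set.indicator {θ : ℝ | Real.cos θ ≤ c} (1 : ℝ → ℝ) θ
      = 2 * Real.arccos (-c) := by
  rw [MeasureTheory.setIntegral_indicator (measurableSet_le Real.measurable_cos measurable_const)]
  simp only [Pi.one_apply]
  rw [MeasureTheory.setIntegral_const]
  have : Set.Ioo (-π) π ∩ {θ : ℝ | Real.cos θ ≤ c} = {θ ∈ Set.Ioo (-π) π | Real.cos θ ≤ c} := rfl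
  rw [this, measureReal_def, ang_measure, smul_eq_mul, mul_one,
    ENNReal.toReal_ofReal (mul_nonneg (by norm_num) (Real.arccos_nonneg _))]

set_option maxHeartbeats 2000000 in
lemma disk_core (R r_c t : ℝ) (hR0 : 0 < R) (hrc : 0 < r_c) (ht : 0 ≤ t) :
    volume (Metric.closedBall (R : ℂ) t ∩ Metric.closedBall 0 r_c)
      = ENNReal.ofReal (∫ r in Set.Ioc 0 t,
          2 * r * Real.arccos ((R ^ 2 + r ^ 2 - r_c ^ 2) / (2 * R * r))) := by
  set A : Set ℂ := Metric.closedBall (R : ℂ) t ∩ Metric.closedBall 0 r_c with hA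
  set B : Set ℂ := {w : ℂ | ‖w‖ ≤ t ∧ ‖w + (R:ℂ)‖ ≤ r_c} with hB
  have hAmeas : MeasurableSet A :=
    Metric.isClosed_closedBall.measurableSet.inter Metric.isClosed_closedBall.measurableSet
  have hBmeas : MeasurableSet B := by
    have hBeq : B = {w : ℂ | ‖w‖ ≤ t} ∩ {w : ℂ | ‖w + (R:ℂ)‖ ≤ r_c} := rfl
    rw [hBeq]
    exact (measurableSet_le continuous_norm.measurable measurable_const).inter
      (measurableSet_le (continuous_norm.comp (by continuity)).measurable measurable_const)
  have hAfin : volume A ≠ ⊤ := by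
    refine ne_top_of_le_ne_top ?_ (measure_mono Set.inter_subset_left)
    exact (MeasureTheory.measure_closedBall_lt_top).ne
  -- membership translation
  have hmem : ∀ w : ℂ, (w + (R:ℂ)) ∈ A ↔ w ∈ B := by
    intro w
    simp only [hA, hB, Set.mem_inter_iff, Metric.mem_closedBall, Set.mem_setOf_eq,
      Complex.dist_eq, add_sub_cancel_right, sub_zero]
  -- step 1: toReal as integral of indicator
  have h1 : (volume A).toReal = ∫ z : ℂ, A.indicator (1 : ℂ → ℝ) z := by
    rw [MeasureTheory.integral_indicator_one hAmeas, measureReal_def]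
  -- step 2: translate
  have h2 : ∫ z : ℂ, A.indicator (1 : ℂ → ℝ) z
      = ∫ w : ℂ, B.indicator (1 : ℂ → ℝ) w := by
    rw [← MeasureTheory.integral_add_right_eq_self (A.indicator (1 : ℂ → ℝ)) (R:ℂ)]
    congr 1
    funext w
    by_cases hw : w ∈ B
    · rw [Set.indicator_of_mem ((hmem w).2 hw), Set.indicator_of_mem hw]
      rfl
    · rw [Set.indicator_of_notMem (fun h => hw ((hmem w).1 h)), Set.indicator_of_notMem hw]
  -- step 3: polar coordinates
  have h3 : ∫ w : ℂ, B.indicator (1 : ℂ → ℝ) w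
      = ∫ p in polarCoord.target, p.1 • B.indicator (1 : ℂ → ℝ) (Complex.polarCoord.symm p) :=
    (Complex.integral_comp_polarCoord_symm _).symm
  -- F in polar coordinates
  set F : ℝ × ℝ → ℝ := fun p => p.1 • B.indicator (1 : ℂ → ℝ) (Complex.polarCoord.symm p) with hF
  set f : ℝ → ℝ := fun r => 2 * r * Real.arccos ((R ^ 2 + r ^ 2 - r_c ^ 2) / (2 * R * r))
    with hf
  have hsymm_cont : Continuous (fun p : ℝ × ℝ => Complex.polarCoord.symm p) := by
    simp only [Complex.polarCoord_symm_apply]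
    continuity
  have hFmeas : Measurable F := by
    apply Measurable.smul measurable_fst
    exact (measurable_const.indicator hBmeas).comp hsymm_cont.measurable
  have hnorm : ∀ p : ℝ × ℝ, ‖Complex.polarCoord.symm p‖ = |p.1| := by
    intro p
    rw [Complex.norm_polarCoord_symm]
  have hbound : ∀ p ∈ polarCoord.target,
      ‖F p‖ ≤ (Set.Ioc 0 t ×ˢ Set.Ioo (-π) π).indicator (fun _ => t) p := by
    intro p hp
    rw [polarCoord_target, Set.mem_prod] at hp
    obtain ⟨hp1, hp2⟩ := hp
    rw [Set.mem_Ioi] at hp1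
    by_cases hpB : Complex.polarCoord.symm p ∈ B
    · have hpt : p.1 ≤ t := by
        have h := hpB.1
        rw [hnorm p, abs_of_pos hp1] at h
        exact h
      rw [Set.indicator_of_mem (Set.mem_prod.2 ⟨Set.mem_Ioc.2 ⟨hp1, hpt⟩, hp2⟩)]
      rw [hF]
      simp only [Set.indicator_of_mem hpB, Pi.one_apply, smul_eq_mul, mul_one,
        Real.norm_eq_abs, abs_of_pos hp1]
      exact hpt
    · rw [hF]
      simp only [Set.indicator_of_notMem hpB, smul_eq_mul, mul_zero, norm_zero]
      exact Set.indicator_nonneg (fun _ _ => ht) p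
  have hboundInt : Integrable ((Set.Ioc (0:ℝ) t ×ˢ Set.Ioo (-π) π).indicator
      (fun _ => t)) (volume : Measure (ℝ × ℝ)) := by
    rw [integrable_indicator_iff (measurableSet_Ioc.prod measurableSet_Ioo)]
    refine integrableOn_const (lt_top_iff_ne_top.1 ?_)
    rw [MeasureTheory.Measure.volume_eq_prod, MeasureTheory.Measure.prod_prod,
      Real.volume_Ioc, Real.volume_Ioo]
    exact ENNReal.mul_lt_top ENNReal.ofReal_lt_top ENNReal.ofReal_lt_top
  have hFint : IntegrableOn F polarCoord.target := by
    apply Integrable.mono' hboundInt.restrict hFmeas.aestronglyMeasurable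
    filter_upwards [MeasureTheory.ae_restrict_mem polarCoord.open_target.measurableSet] with p hp
    exact hbound p hp
  have h4 : (∫ p in polarCoord.target, F p)
      = ∫ r in Set.Ioi (0:ℝ), ∫ θ in Set.Ioo (-π) π, F (r, θ) := by
    rw [polarCoord_target] at hFint ⊢
    rw [MeasureTheory.Measure.volume_eq_prod] at hFint ⊢
    exact MeasureTheory.setIntegral_prod F hFint
  have h5 : ∀ r ∈ Set.Ioi (0:ℝ), (∫ θ in Set.Ioo (-π) π, F (r, θ))
      = Set.indicator (Set.Ioc 0 t) f r := by
    intro r hr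
    rw [Set.mem_Ioi] at hr
    have hnorm1 : ∀ θ : ℝ, ‖Complex.polarCoord.symm (r, θ)‖ = r := by
      intro θ
      rw [hnorm (r, θ)]
      exact abs_of_pos hr
    have hcond : ∀ θ : ℝ, (Complex.polarCoord.symm (r, θ) ∈ B)
        ↔ (r ≤ t ∧ Real.cos θ ≤ (r_c^2 - R^2 - r^2)/(2*R*r)) := by
      intro θ
      have hsq : ‖Complex.polarCoord.symm (r, θ) + (R:ℂ)‖^2
          = r^2 + 2*R*r*Real.cos θ + R^2 := by
        rw [Complex.sq_norm, Complex.polarCoord_symm_apply]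
        simp only [Complex.normSq_apply, Complex.add_re, Complex.add_im, Complex.mul_re,
          Complex.mul_im, Complex.ofReal_re, Complex.ofReal_im, Complex.add_re, Complex.add_im,
          Complex.I_re, Complex.I_im, Complex.ofReal_re, Complex.mul_re]
        nlinarith [Real.sin_sq_add_cos_sq θ]
      have hiff : ‖Complex.polarCoord.symm (r, θ) + (R:ℂ)‖ ≤ r_c
          ↔ Real.cos θ ≤ (r_c^2 - R^2 - r^2)/(2*R*r) := by
        rw [← pow_le_pow_iff_left₀ (norm_nonneg _) hrc.le (two_ne_zero), hsq,
          le_div_iff₀ (by positivity)]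
        constructor <;> intro h <;> nlinarith
      rw [hB]
      simp only [Set.mem_setOf_eq, hnorm1]
      rw [hiff]
    by_cases hrt : r ≤ t
    · rw [Set.indicator_of_mem (Set.mem_Ioc.2 ⟨hr, hrt⟩)]
      have heq : ∀ θ : ℝ, F (r, θ) = r * Set.indicator
          {θ : ℝ | Real.cos θ ≤ (r_c^2 - R^2 - r^2)/(2*R*r)} (1 : ℝ → ℝ) θ := by
        intro θ
        rw [hF]
        simp only [smul_eq_mul]
        congr 1
        by_cases hθ : Real.cos θ ≤ (r_c^2 - R^2 - r^2)/(2*R*r)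
        · rw [Set.indicator_of_mem ((hcond θ).2 ⟨hrt, hθ⟩), Set.indicator_of_mem
            (show θ ∈ {θ : ℝ | Real.cos θ ≤ (r_c^2 - R^2 - r^2)/(2*R*r)} from hθ)]
          rfl
        · rw [Set.indicator_of_notMem (fun h => hθ ((hcond θ).1 h).2),
            Set.indicator_of_notMem
              (show θ ∉ {θ : ℝ | Real.cos θ ≤ (r_c^2 - R^2 - r^2)/(2*R*r)} from hθ)]
      simp_rw [heq]
      rw [MeasureTheory.integral_const_mul, ang_integral]
      have hneg : -((r_c^2 - R^2 - r^2)/(2*R*r)) = (R^2 + r^2 - r_c^2)/(2*R*r) := by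
        ring
      rw [hneg, hf]
      ring
    · rw [Set.indicator_of_notMem (by rw [Set.mem_Ioc]; exact fun h => hrt h.2)]
      have heq : ∀ θ : ℝ, F (r, θ) = 0 := by
        intro θ
        rw [hF]
        simp only [smul_eq_mul]
        rw [Set.indicator_of_notMem (fun h => hrt ((hcond θ).1 h).1), mul_zero]
      simp_rw [heq]
      simp
  have h6 : (∫ r in Set.Ioi (0:ℝ), Set.indicator (Set.Ioc 0 t) f r) = ∫ r in Set.Ioc 0 t, f r := by
    rw [MeasureTheory.setIntegral_indicator measurableSet_Ioc]
    congr 1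
    rw [Set.inter_eq_self_of_subset_right Set.Ioc_subset_Ioi_self]
  have hfinal : (volume A).toReal = ∫ r in Set.Ioc 0 t, f r := by
    rw [h1, h2, h3, h4, MeasureTheory.setIntegral_congr_fun measurableSet_Ioi h5, h6]
  rw [← ENNReal.ofReal_toReal hAfin, hfinal]


lemma f_int (R r_c a b : ℝ) (ha : 0 ≤ a) :
    MeasureTheory.IntegrableOn
      (fun r => 2 * r * Real.arccos ((R ^ 2 + r ^ 2 - r_c ^ 2) / (2 * R * r)))
      (Set.Ioc a b) := by
  have hmeas : Measurable
      (fun r : ℝ => 2 * r * Real.arccos ((R ^ 2 + r ^ 2 - r_c ^ 2) / (2 * R * r))) := by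
    apply Measurable.mul (by fun_prop)
    exact Real.continuous_arccos.measurable.comp (by fun_prop)
  apply MeasureTheory.Integrable.mono'
    (g := fun _ => 2 * |b| * π) (MeasureTheory.integrableOn_const (lt_top_iff_ne_top.1 (by
      rw [Real.volume_Ioc]; exact ENNReal.ofReal_lt_top)))
    hmeas.aestronglyMeasurable
  filter_upwards [MeasureTheory.ae_restrict_mem measurableSet_Ioc] with r hr
  obtain ⟨hr1, hr2⟩ := hr
  have h0r : 0 < r := lt_of_le_of_lt ha hr1
  have hb : r ≤ |b| := hr2.trans (le_abs_self b)
  have ha1 := Real.arccos_nonneg ((R ^ 2 + r ^ 2 - r_c ^ 2) / (2 * R * r))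
  have ha2 := Real.arccos_le_pi ((R ^ 2 + r ^ 2 - r_c ^ 2) / (2 * R * r))
  rw [Real.norm_eq_abs, abs_of_nonneg (by positivity)]
  nlinarith [Real.pi_pos]

lemma f_eval (R r_c s : ℝ) (hR0 : 0 < R) (hrc : 0 < r_c) (hs : 0 ≤ s) (hsle : s ≤ r_c - R) :
    ∫ r in Set.Ioc 0 s, 2 * r * Real.arccos ((R ^ 2 + r ^ 2 - r_c ^ 2) / (2 * R * r))
      = π * s ^ 2 := by
  have heq : Set.EqOn (fun r => 2 * r * Real.arccos ((R ^ 2 + r ^ 2 - r_c ^ 2) / (2 * R * r)))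
      (fun r => 2 * r * π) (Set.Ioc 0 s) := by
    intro r hr
    obtain ⟨hr1, hr2⟩ := hr
    have harg : (R ^ 2 + r ^ 2 - r_c ^ 2) / (2 * R * r) ≤ -1 := by
      rw [div_le_iff₀ (by positivity)]
      nlinarith
    simp only
    rw [Real.arccos_eq_pi.2 harg]
  rw [MeasureTheory.setIntegral_congr_fun measurableSet_Ioc heq,
    ← intervalIntegral.integral_of_le hs]
  simp only [intervalIntegral.integral_mul_const]
  rw [intervalIntegral.integral_const_mul, integral_id]
  ring

end Aux

/-- Paper's Lemma 1, case `R ≤ r_c`: for a point `X` uniformly distributed on the closed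
disk of radius `r_c` centered at the origin of `ℝ²`, and a point `p` at distance
`0 < R ≤ r_c` from the origin, (i) the CDF of `‖X - p‖` at `t ∈ [0, r_c - R]` is `t²/r_c²`,
and (ii) on `[r_c - R, R + r_c]` it is `(r_c - R)²/r_c²` plus the integral of the density
`(2r/(π r_c²)) · arccos((R² + r² − r_c²)/(2 R r))`. -/
theorem lemma1_case_R_le_rc (r_c R : ℝ) (hrc : 0 < r_c) (hR0 : 0 < R) (hR : R ≤ r_c)
    (p : EuclideanSpace ℝ (Fin 2)) (hp : ‖p‖ = R)
    (μ : Measure (EuclideanSpace ℝ (Fin 2)))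
    (hμ : μ = (ENNReal.ofReal (π * r_c ^ 2))⁻¹ •
      (volume.restrict (Metric.closedBall (0 : EuclideanSpace ℝ (Fin 2)) r_c))) :
    (∀ t : ℝ, 0 ≤ t → t ≤ r_c - R →
      μ {x | ‖x - p‖ ≤ t} = ENNReal.ofReal (t ^ 2 / r_c ^ 2)) ∧
    (∀ t : ℝ, r_c - R ≤ t → t ≤ R + r_c →
      μ {x | ‖x - p‖ ≤ t} =
        ENNReal.ofReal
          ((r_c - R) ^ 2 / r_c ^ 2 +
            ∫ r in (r_c - R)..t,
              (2 * r / (π * r_c ^ 2)) *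
                Real.arccos ((R ^ 2 + r ^ 2 - r_c ^ 2) / (2 * R * r)))) := by
  -- construct an isometry sending `p` to `(R : ℂ)`
  obtain ⟨g, hg⟩ : ∃ g : EuclideanSpace ℝ (Fin 2) ≃ₗᵢ[ℝ] ℂ, g p = (R : ℂ) := by
    set e : EuclideanSpace ℝ (Fin 2) ≃ₗᵢ[ℝ] ℂ := Complex.orthonormalBasisOneI.repr.symm with he
    set q : ℂ := e p with hq
    have hqabs : ‖q‖ = R := by
      rw [hq, e.norm_map, hp]
    set u : ℂ := (starRingEnd ℂ) q / R with hu
    have hunorm : ‖u‖ = 1 := by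
      rw [hu, norm_div, Complex.norm_conj, hqabs]
      simp [abs_of_pos hR0]
      exact hR0.ne'
    refine ⟨e.trans (rotation ⟨u, @id (u ∈ Submonoid.unitSphere ℂ) (mem_sphere_zero_iff_norm.2 hunorm)⟩), ?_⟩
    simp only [LinearIsometryEquiv.trans_apply]
    rw [← hq]
    show (u * q) = (R : ℂ)
    rw [hu, div_mul_eq_mul_div, Complex.conj_mul']
    rw [show ‖q‖ = R from hqabs]
    rw [sq]
    push_cast
    rw [mul_div_assoc, div_self (by exact_mod_cast hR0.ne' : (R:ℂ) ≠ 0), mul_one]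
  set f : ℝ → ℝ := fun r => 2 * r * Real.arccos ((R ^ 2 + r ^ 2 - r_c ^ 2) / (2 * R * r))
    with hf
  have key : ∀ s : ℝ, 0 ≤ s → μ {x | ‖x - p‖ ≤ s}
      = (ENNReal.ofReal (π * r_c ^ 2))⁻¹ * ENNReal.ofReal (∫ r in Set.Ioc 0 s, f r) := by
    intro s hs
    rw [hμ, Measure.smul_apply, smul_eq_mul]
    congr 1
    rw [Measure.restrict_apply' Metric.isClosed_closedBall.measurableSet]
    have hseteq : {x | ‖x - p‖ ≤ s} ∩ Metric.closedBall 0 r_c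
        = g ⁻¹' (Metric.closedBall (R : ℂ) s ∩ Metric.closedBall 0 r_c) := by
      ext x
      simp only [Set.mem_inter_iff, Set.mem_setOf_eq, Metric.mem_closedBall, Set.mem_preimage,
        dist_eq_norm, sub_zero, ← hg, ← map_sub, g.norm_map]
    rw [hseteq,
      g.measurePreserving.measure_preimage
        ((Metric.isClosed_closedBall.measurableSet.inter
          Metric.isClosed_closedBall.measurableSet).nullMeasurableSet),
      disk_core R r_c s hR0 hrc hs]
  have hπrc : (0:ℝ) < π * r_c ^ 2 := by positivity
  constructor
  · intro t ht htle
    rw [key t ht, hf, f_eval R r_c t hR0 hrc ht htle,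
      ← ENNReal.ofReal_inv_of_pos hπrc, ← ENNReal.ofReal_mul (by positivity)]
    congr 1
    field_simp
  · intro t h1 _h2
    have hs0 : (0:ℝ) ≤ r_c - R := by linarith
    have ht0 : (0:ℝ) ≤ t := le_trans hs0 h1
    have split : (∫ r in Set.Ioc 0 t, f r)
        = π * (r_c - R) ^ 2 + ∫ r in (r_c - R)..t, f r := by
      rw [show Set.Ioc (0:ℝ) t = Set.Ioc 0 (r_c - R) ∪ Set.Ioc (r_c - R) t from
        (Set.Ioc_union_Ioc_eq_Ioc hs0 h1).symm]
      rw [MeasureTheory.setIntegral_union (Set.Ioc_disjoint_Ioc_of_le le_rfl) measurableSet_Ioc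
        (f_int R r_c 0 (r_c - R) le_rfl) (f_int R r_c (r_c - R) t hs0)]
      rw [hf, f_eval R r_c (r_c - R) hR0 hrc hs0 le_rfl,
        intervalIntegral.integral_of_le h1]
    have hI : (∫ r in (r_c - R)..t,
          (2 * r / (π * r_c ^ 2)) * Real.arccos ((R ^ 2 + r ^ 2 - r_c ^ 2) / (2 * R * r)))
        = (π * r_c ^ 2)⁻¹ * ∫ r in (r_c - R)..t, f r := by
      rw [← intervalIntegral.integral_const_mul]
      apply intervalIntegral.integral_congr
      intro r _
      simp only [hf]
      ring
    rw [key t ht0, split, hI,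
      ← ENNReal.ofReal_inv_of_pos hπrc, ← ENNReal.ofReal_mul (by positivity)]
    congr 1
    field_simp
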